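/- (Cycle removal) Let (x_i, k_i), i = 1,…,m, be distinct pairs such that the edges ρ_{k_i}(x_i) form a directed cycle in G, with k_i ≤ u(ρ,σ)(x_i) − 1 for all i. Let ρ' be obtained from ρ by deleting the rotors ρ_{k_i}(x_i) from the stacks and re-indexing. Then u(ρ,σ) = u(ρ',σ) + χ, where χ(x) = #{i : x_i = x}; moreover the final chip configurations and final top rotor configurations agree: σ + Δ_ρ u(ρ,σ) = σ + Δ_{ρ'} u(ρ',σ) and Top_ρ(u(ρ,σ)) = Top_{ρ'}(u(ρ',σ)). -/

import Mathlib

open scoped BigOperators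

open Classical in
/-- Number of occurrences of the edge `e` among the rotors `ρ_1(s e), …, ρ_n(s e)`. -/
noncomputable def Rcount {V E : Type*} (src : E → V) (ρ : V → ℕ → E) (e : E) (n : ℕ) : ℕ :=
  ((Finset.Icc 1 n).filter fun k => ρ (src e) k = e).card

open Classical in
/-- The stack Laplacian `Δ_ρ u (x) = Σ_{t(e)=x} R_ρ(e, u(s e)) − u x`. -/
noncomputable def stackLap {V E : Type*} (src tgt : E → V) (ρ : V → ℕ → E)
    (u : V → ℕ) (x : V) : ℤ :=
  (∑ᶠ e : E, if tgt e = x then (Rcount src ρ e (u (src e)) : ℤ) else 0) - u x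

/-- A rotor configuration `r` is acyclic on `A`: every nonempty finite subset of `A`
contains a vertex whose rotor points outside the subset. -/
def AcyclicOn {V E : Type*} (tgt : E → V) (r : V → E) (A : Set V) : Prop :=
  ∀ A' ⊆ A, A'.Finite → A'.Nonempty → ∃ x ∈ A', tgt (r x) ∉ A'

/-- `u` is the odometer of the chip configuration `σ` with rotor stacks `ρ`:
`u` has finite support, `σ + Δ_ρ u ≤ 1` everywhere, `σ + Δ_ρ u = 1` on the support
of `u`, and the top rotors `Top_ρ(u)` are acyclic on the support of `u`. -/
def IsOdometer {V E : Type*} (src tgt : E → V) (ρ : V → ℕ → E)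
    (σ : V → ℤ) (u : V → ℕ) : Prop :=
  (Function.support u).Finite ∧
  (∀ x, σ x + stackLap src tgt ρ u x ≤ 1) ∧
  (∀ x, u x ≠ 0 → σ x + stackLap src tgt ρ u x = 1) ∧
  AcyclicOn tgt (fun x => ρ x (u x)) (Function.support u)

open Classical in
/-- `chi x v` is the number of indices `i` with `x i = v`. -/
noncomputable def chi {V : Type*} {m : ℕ} (x : Fin m → V) (v : V) : ℕ :=
  (Finset.univ.filter fun i => x i = v).card

open Classical in
/-- Cycle removal: if the rotors `ρ_{k i}(x i)` (for distinct pairs `(x i, k i)` with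
`1 ≤ k i ≤ u(x i) − 1`) form a directed cycle, and `ρ'` is obtained from `ρ` by deleting
these rotors and re-indexing, then the odometer for `ρ'` is `u − χ`, and the final chip
and top rotor configurations agree. -/
theorem cycle_removal {V E : Type*}
    (src tgt : E → V) (ρ ρ' : V → ℕ → E)
    (hsrc : ∀ x k, src (ρ x k) = x) (hsrc' : ∀ x k, src (ρ' x k) = x)
    (hloc : ∀ x : V, {e : E | tgt e = x}.Finite)
    (σ : V → ℤ) (m : ℕ) [NeZero m] (x : Fin m → V) (k : Fin m → ℕ)
    (hdist : Function.Injective fun i => (x i, k i))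
    (hcyc : ∀ i : Fin m, src (ρ (x (i + 1)) (k (i + 1))) = tgt (ρ (x i) (k i)))
    (u : V → ℕ) (hu : IsOdometer src tgt ρ σ u)
    (hk : ∀ i, 1 ≤ k i ∧ k i ≤ u (x i) - 1)
    (hρ' : ∀ v : V, ∃ g : ℕ → ℕ, StrictMono g ∧ g 0 = 0 ∧
      Set.range g = {n : ℕ | ¬ ∃ i, x i = v ∧ k i = n} ∧ ∀ n, ρ' v n = ρ v (g n)) :
    IsOdometer src tgt ρ' σ (fun v => u v - chi x v) ∧
    (∀ v, σ v + stackLap src tgt ρ u v =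
      σ v + stackLap src tgt ρ' (fun w => u w - chi x w) v) ∧
    ∀ v, ρ v (u v) = ρ' v (u v - chi x v) := by
  obtain ⟨hfin, hle, heq, hac⟩ := hu
  choose g hmono hg0 hrange hgeq using hρ'
  have hku : ∀ i, 1 ≤ k i ∧ k i < u (x i) := fun i => ⟨(hk i).1, by have := hk i; omega⟩
  set c : E → ℕ := fun e => (Finset.univ.filter fun i => ρ (x i) (k i) = e).card with hc
  have hmem : ∀ v n, n ∈ Set.range (g v) ↔ ¬ ∃ i, x i = v ∧ k i = n := by
    intro v n; rw [hrange v]; rfl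
  have huv_mem : ∀ v, u v ∈ Set.range (g v) := by
    intro v
    rw [hmem]
    rintro ⟨i, hxi, hki⟩
    have h2 := hku i
    rw [hxi] at h2
    omega
  -- counting the deleted indices below u v
  have hDcard : ∀ v, ((Finset.range (u v)).filter fun n => ∃ i, x i = v ∧ k i = n).card
      = chi x v := by
    intro v
    rw [chi]
    refine (Finset.card_nbij k ?_ ?_ ?_).symm
    · intro i hi
      simp only [Finset.mem_coe, Finset.mem_filter, Finset.mem_univ, true_and] at hi
      have h2 := hku i
      rw [hi] at h2
      simp only [Finset.mem_coe, Finset.mem_filter, Finset.mem_range]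
      exact ⟨h2.2, i, hi, rfl⟩
    · intro a ha b hb hab
      simp only [Finset.coe_filter, Set.mem_setOf_eq] at ha hb
      exact hdist (by simp [Prod.ext_iff, ha.2, hb.2, hab])
    · rintro n hn
      simp only [Finset.coe_filter, Set.mem_setOf_eq, Finset.mem_range] at hn
      obtain ⟨hn1, i, hxi, hki⟩ := hn
      exact ⟨i, by simp [hxi], hki⟩
  have hchile : ∀ v, chi x v ≤ u v := by
    intro v
    rw [← hDcard v]
    exact (Finset.card_filter_le _ _).trans (by simp)
  -- the key re-indexing identity
  have hgval : ∀ v, g v (u v - chi x v) = u v := by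
    intro v
    obtain ⟨n, hn⟩ := huv_mem v
    suffices h : n = u v - chi x v by rw [← h]; exact hn
    have himg : (Finset.range n).image (g v)
        = (Finset.range (u v)).filter (fun j => j ∈ Set.range (g v)) := by
      ext j
      simp only [Finset.mem_image, Finset.mem_range, Finset.mem_filter]
      constructor
      · rintro ⟨a, ha, rfl⟩
        exact ⟨by rw [← hn]; exact hmono v ha, a, rfl⟩
      · rintro ⟨hj, a, rfl⟩
        rw [← hn] at hj
        exact ⟨a, (hmono v).lt_iff_lt.mp hj, rfl⟩
    have hcard := congrArg Finset.card himg
    rw [Finset.card_image_of_injective _ (hmono v).injective, Finset.card_range] at hcard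
    have h2 : (Finset.range (u v)).filter (fun j => j ∈ Set.range (g v))
        = (Finset.range (u v)).filter (fun j => ¬ ∃ i, x i = v ∧ k i = j) :=
      Finset.filter_congr fun j _ => by rw [hmem]
    rw [h2] at hcard
    have h3 := Finset.card_filter_add_card_filter_not
      (s := Finset.range (u v)) (p := fun j => ∃ i, x i = v ∧ k i = j)
    rw [Finset.card_range] at h3
    have h4 := hDcard v
    omega
  have htop : ∀ v, ρ v (u v) = ρ' v (u v - chi x v) := by
    intro v
    rw [hgeq v (u v - chi x v), hgval v]
  -- the image of [1, u v - chi] under g v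
  have himg2 : ∀ v, (Finset.Icc 1 (u v - chi x v)).image (g v)
      = (Finset.Icc 1 (u v)).filter (fun j => j ∈ Set.range (g v)) := by
    intro v
    ext j
    simp only [Finset.mem_image, Finset.mem_Icc, Finset.mem_filter]
    constructor
    · rintro ⟨a, ⟨ha1, ha2⟩, rfl⟩
      refine ⟨⟨?_, ?_⟩, a, rfl⟩
      · have h0 : g v 0 < g v a := hmono v (by omega)
        rw [hg0 v] at h0
        omega
      · rw [← hgval v]
        exact (hmono v).monotone ha2
    · rintro ⟨⟨hj1, hj2⟩, a, rfl⟩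
      refine ⟨a, ⟨?_, ?_⟩, rfl⟩
      · rcases Nat.eq_zero_or_pos a with h | h
        · rw [h, hg0 v] at hj1; omega
        · omega
      · rw [← hgval v] at hj2
        exact (hmono v).le_iff_le.mp hj2
  -- Rcount relation
  have hRc : ∀ e, Rcount src ρ' e (u (src e) - chi x (src e)) + c e
      = Rcount src ρ e (u (src e)) := by
    intro e
    have h1 : Rcount src ρ' e (u (src e) - chi x (src e))
        = ((Finset.Icc 1 (u (src e))).filter
            (fun j => ρ (src e) j = e ∧ j ∈ Set.range (g (src e)))).card := by
      rw [Rcount]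
      have e1 : (Finset.Icc 1 (u (src e) - chi x (src e))).filter (fun j => ρ' (src e) j = e)
          = (Finset.Icc 1 (u (src e) - chi x (src e))).filter
              (fun j => ρ (src e) (g (src e) j) = e) :=
        Finset.filter_congr fun j _ => by rw [hgeq (src e) j]
      have e2 : ((Finset.Icc 1 (u (src e))).filter (fun j => j ∈ Set.range (g (src e)))).filter
            (fun j => ρ (src e) j = e)
          = ((Finset.Icc 1 (u (src e) - chi x (src e))).filter
              (fun j => ρ (src e) (g (src e) j) = e)).image (g (src e)) := by
        rw [← himg2, Finset.filter_image]
      rw [e1, ← Finset.card_image_of_injective _ (hmono (src e)).injective, ← e2,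
        Finset.filter_filter]
      exact congrArg Finset.card (Finset.filter_congr fun j _ => and_comm)
    have h2 : c e = ((Finset.Icc 1 (u (src e))).filter
        (fun j => ρ (src e) j = e ∧ ¬ j ∈ Set.range (g (src e)))).card := by
      refine Finset.card_nbij k ?_ ?_ ?_
      · intro i hi
        simp only [Finset.mem_coe, Finset.mem_filter, Finset.mem_univ, true_and] at hi
        have hxi : x i = src e := by rw [← hi, hsrc]
        have h2 := hku i
        rw [hxi] at h2
        simp only [Finset.mem_coe, Finset.mem_filter, Finset.mem_Icc, hmem, not_not]
        exact ⟨⟨h2.1, by omega⟩, by rw [← hxi]; exact hi, i, hxi, rfl⟩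
      · intro a ha b hb hab
        simp only [Finset.coe_filter, Set.mem_setOf_eq] at ha hb
        have hxa : x a = src e := by rw [← ha.2, hsrc]
        have hxb : x b = src e := by rw [← hb.2, hsrc]
        exact hdist (by simp [Prod.ext_iff, hxa, hxb, hab])
      · rintro n hn
        simp only [Finset.coe_filter, Set.mem_setOf_eq, Finset.mem_Icc, hmem, not_not] at hn
        obtain ⟨i, hxi, hki⟩ : ∃ i, x i = src e ∧ k i = n := by tauto
        have hρn : ρ (src e) n = e := by tauto
        refine ⟨i, ?_, hki⟩
        simp only [Finset.coe_filter, Set.mem_setOf_eq, Finset.mem_univ, true_and]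
        rw [hxi, hki]
        exact hρn
    have h3 : ((Finset.Icc 1 (u (src e))).filter
          (fun j => ρ (src e) j = e ∧ j ∈ Set.range (g (src e)))).card
        + ((Finset.Icc 1 (u (src e))).filter
          (fun j => ρ (src e) j = e ∧ ¬ j ∈ Set.range (g (src e)))).card
        = ((Finset.Icc 1 (u (src e))).filter (fun j => ρ (src e) j = e)).card := by
      rw [← Finset.filter_filter, ← Finset.filter_filter]
      exact Finset.card_filter_add_card_filter_not
        (p := fun j => j ∈ Set.range (g (src e)))
    rw [h1, h2, h3, Rcount]
  -- converting finsums to finite sums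
  have hfs : ∀ (v : V) (f : E → ℤ),
      (∑ᶠ e, if tgt e = v then f e else 0)
        = ∑ e ∈ (hloc v).toFinset, (if tgt e = v then f e else 0) := by
    intro v f
    apply finsum_eq_finset_sum_of_support_subset
    intro e he
    simp only [Function.mem_support, ne_eq] at he
    have h : tgt e = v := by by_contra h; simp [h] at he
    simp [Set.Finite.coe_toFinset, h]
  -- the cycle count sum
  have hsumc : ∀ v, (∑ e ∈ (hloc v).toFinset, if tgt e = v then (c e : ℤ) else 0)
      = chi x v := by
    intro v
    have hnat : (∑ e ∈ (hloc v).toFinset, if tgt e = v then c e else 0) = chi x v := by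
      rw [← Finset.sum_filter]
      have hside : ∀ i ∈ (Finset.univ.filter fun i : Fin m => tgt (ρ (x i) (k i)) = v),
          ρ (x i) (k i) ∈ (hloc v).toFinset.filter fun e => tgt e = v := by
        intro i hi
        simp only [Finset.mem_filter, Finset.mem_univ, true_and] at hi
        simp [Set.Finite.mem_toFinset, hi]
      have hfib := Finset.card_eq_sum_card_fiberwise hside
      have hstep : ∀ e ∈ (hloc v).toFinset.filter fun e => tgt e = v,
          c e = ((Finset.univ.filter fun i : Fin m => tgt (ρ (x i) (k i)) = v).filter
            fun i => ρ (x i) (k i) = e).card := by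
        intro e he
        simp only [Finset.mem_filter] at he
        have hfe : (Finset.univ.filter fun i : Fin m => ρ (x i) (k i) = e)
            = ((Finset.univ.filter fun i : Fin m => tgt (ρ (x i) (k i)) = v).filter
                fun i => ρ (x i) (k i) = e) := by
          rw [Finset.filter_filter]
          refine Finset.filter_congr fun i _ => ?_
          constructor
          · intro h; exact ⟨by rw [h]; exact he.2, h⟩
          · exact fun h => h.2
        simp only [hc]
        rw [hfe]
      rw [Finset.sum_congr rfl hstep, ← hfib]
      -- now count indices i with tgt (ρ (x i) (k i)) = v
      have htgt : ∀ i : Fin m, tgt (ρ (x i) (k i)) = x (i + 1) := by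
        intro i
        rw [← hcyc i, hsrc]
      have hset : (Finset.univ.filter fun i : Fin m => tgt (ρ (x i) (k i)) = v)
          = Finset.univ.filter fun i : Fin m => x (i + 1) = v :=
        Finset.filter_congr fun i _ => by rw [htgt i]
      rw [hset, chi]
      refine Finset.card_nbij (fun i => i + 1) ?_ ?_ ?_
      · intro i hi
        simp only [Finset.mem_coe, Finset.mem_filter, Finset.mem_univ, true_and] at hi ⊢
        exact hi
      · intro a _ b _ hab
        simpa using add_left_injective (1 : Fin m) hab
      · rintro j hj
        simp only [Finset.coe_filter, Set.mem_setOf_eq, Finset.mem_univ, true_and] at hj ⊢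
        refine ⟨j - 1, ?_, ?_⟩
        · show x (j - 1 + 1) = v
          rw [sub_add_cancel]; exact hj
        · show j - 1 + 1 = j
          rw [sub_add_cancel]
    calc (∑ e ∈ (hloc v).toFinset, if tgt e = v then (c e : ℤ) else 0)
        = ((∑ e ∈ (hloc v).toFinset, if tgt e = v then c e else 0 : ℕ) : ℤ) := by
          push_cast
          exact Finset.sum_congr rfl fun e _ => by split <;> simp
      _ = chi x v := by rw [hnat]
  -- the Laplacians agree
  have hlap : ∀ v, stackLap src tgt ρ' (fun w => u w - chi x w) v
      = stackLap src tgt ρ u v := by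
    intro v
    simp only [stackLap]
    rw [hfs v, hfs v]
    have hsum_eq : (∑ e ∈ (hloc v).toFinset,
          if tgt e = v then ((Rcount src ρ' e (u (src e) - chi x (src e)) : ℤ)) else 0)
        = (∑ e ∈ (hloc v).toFinset, if tgt e = v then (Rcount src ρ e (u (src e)) : ℤ) else 0)
          - (∑ e ∈ (hloc v).toFinset, if tgt e = v then (c e : ℤ) else 0) := by
      rw [← Finset.sum_sub_distrib]
      refine Finset.sum_congr rfl fun e _ => ?_
      by_cases h : tgt e = v
      · simp only [h, if_true]
        have := hRc e
        omega
      · simp [h]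
    rw [hsum_eq, hsumc v]
    have hcast : ((u v - chi x v : ℕ) : ℤ) = (u v : ℤ) - chi x v := by
      have := hchile v
      omega
    rw [hcast]
    ring
  have hsupp : Function.support (fun v => u v - chi x v) ⊆ Function.support u := by
    intro v hv
    simp only [Function.mem_support, ne_eq] at hv ⊢
    omega
  refine ⟨⟨hfin.subset hsupp, ?_, ?_, ?_⟩, fun v => by rw [hlap v], fun v => htop v⟩
  · intro v
    rw [hlap v]
    exact hle v
  · intro v hv
    rw [hlap v]
    exact heq v (by simp only [ne_eq] at hv ⊢; omega)
  · intro A' hsub hfin' hne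
    obtain ⟨y, hy, hny⟩ := hac A' (hsub.trans hsupp) hfin' hne
    refine ⟨y, hy, ?_⟩
    show tgt (ρ' y (u y - chi x y)) ∉ A'
    rw [← htop y]
    exact hny
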